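/- Let A be a finite set, π_ref a strictly positive probability distribution on A, β > 0, and r : A → ℝ. Suppose π* is the DPO-optimal policy π*(a) = π_ref(a)·exp(r(a)/β)/Z with Z = ∑_{a'} π_ref(a')·exp(r(a')/β). Then for any two actions a, b ∈ A, the reward difference satisfies the partition-function-free identity r(a) - r(b) = β·(log(π*(a)/π_ref(a)) - log(π*(b)/π_ref(b))); consequently, the Bradley-Terry preference probability σ(r(a)-r(b)) = 1/(1+exp(-(r(a)-r(b)))) can be expressed purely in terms of policy log-ratios. -/

import Mathlib

open Real Finset

theorem dpo_reward_difference_identity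
    (A : Type*) [Fintype A] [Nonempty A] (r : A → ℝ) (β : ℝ) (hβ : 0 < β)
    (πref : A → ℝ) (hrefpos : ∀ a, 0 < πref a) (hrefsum : ∑ a : A, πref a = 1)
    (Z : ℝ) (hZ : Z = ∑ a' : A, πref a' * Real.exp (r a' / β))
    (πstar : A → ℝ) (hπstar : ∀ a, πstar a = πref a * Real.exp (r a / β) / Z)
    (a b : A) :
    (r a - r b
      = β * (Real.log (πstar a / πref a) - Real.log (πstar b / πref b))) ∧
    (1 / (1 + Real.exp (-(r a - r b)))
      = 1 / (1 + Real.exp (-(β * (Real.log (πstar a / πref a)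
          - Real.log (πstar b / πref b)))))) := by
  have hZpos : 0 < Z := by
    rw [hZ]
    exact Finset.sum_pos (fun i _ => mul_pos (hrefpos i) (Real.exp_pos _))
      Finset.univ_nonempty
  have key : ∀ c : A, Real.log (πstar c / πref c) = r c / β - Real.log Z := by
    intro c
    rw [hπstar c]
    rw [show πref c * Real.exp (r c / β) / Z / πref c = Real.exp (r c / β) / Z by
      field_simp [hZpos.ne', (hrefpos c).ne']]
    rw [Real.log_div (Real.exp_ne_zero _) hZpos.ne', Real.log_exp]
  have main : r a - r b
      = β * (Real.log (πstar a / πref a) - Real.log (πstar b / πref b)) := by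
    rw [key a, key b]
    field_simp
    ring
  exact ⟨main, by rw [main]⟩
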